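/- Let X_i ⊂ {0,1}^{d_i}, X_j ⊂ {0,1}^{d_j} be finite nonempty sets, and A_i ∈ {0,1}^{K×d_i}, A_j ∈ {0,1}^{K×d_j} with A_i x ∈ {0,1}^K for all x ∈ X_i and A_j x ∈ {0,1}^K for all x ∈ X_j. Let θ_i ∈ ℝ^{d_i}, θ_j ∈ ℝ^{d_j}, and let x* ∈ argmin_{x ∈ X_i} ⟨θ_i, x⟩ with ν := A_i x*. Suppose Δ ∈ ℝ^K satisfies Δ(s) ≥ 0 when ν(s)=1 and Δ(s) ≤ 0 when ν(s)=0, and additionally x* ∈ argmin_{x ∈ X_i} ⟨θ_i + A_iᵀ Δ, x⟩. Then min_{x ∈ X_i} ⟨θ_i, x⟩ + min_{y ∈ X_j} ⟨θ_j, y⟩ ≤ min_{x ∈ X_i} ⟨θ_i + A_iᵀΔ, x⟩ + min_{y ∈ X_j} ⟨θ_j - A_jᵀΔ, y⟩. -/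

import Mathlib

open Matrix Finset in
/-- Monotonicity condition (Lemma 1): an admissible message Δ sent from factor i
to factor j does not decrease the sum of the two factors' minima. -/
theorem monotonicity_condition
    (di dj K : ℕ)
    (Xi : Finset (Fin di → ℝ)) (hXi : Xi.Nonempty)
    (Xj : Finset (Fin dj → ℝ)) (hXj : Xj.Nonempty)
    (hXibin : ∀ x ∈ Xi, ∀ t, x t = 0 ∨ x t = 1)
    (hXjbin : ∀ x ∈ Xj, ∀ t, x t = 0 ∨ x t = 1)
    (Ai : Matrix (Fin K) (Fin di) ℝ) (Aj : Matrix (Fin K) (Fin dj) ℝ)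
    (hAi : ∀ x ∈ Xi, ∀ s, Ai.mulVec x s = 0 ∨ Ai.mulVec x s = 1)
    (hAj : ∀ x ∈ Xj, ∀ s, Aj.mulVec x s = 0 ∨ Aj.mulVec x s = 1)
    (θi : Fin di → ℝ) (θj : Fin dj → ℝ)
    (xstar : Fin di → ℝ) (hxstar : xstar ∈ Xi)
    (hxstarmin : ∀ x ∈ Xi, dotProduct θi xstar ≤ dotProduct θi x)
    (Δ : Fin K → ℝ)
    (hΔ : ∀ s, (Ai.mulVec xstar s = 1 → 0 ≤ Δ s) ∧ (Ai.mulVec xstar s = 0 → Δ s ≤ 0))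
    (hxstarmin' : ∀ x ∈ Xi,
      dotProduct (θi + Ai.transpose.mulVec Δ) xstar ≤
        dotProduct (θi + Ai.transpose.mulVec Δ) x) :
    Xi.inf' hXi (fun x => dotProduct θi x) +
      Xj.inf' hXj (fun y => dotProduct θj y) ≤
    Xi.inf' hXi (fun x => dotProduct (θi + Ai.transpose.mulVec Δ) x) +
      Xj.inf' hXj (fun y => dotProduct (θj - Aj.transpose.mulVec Δ) y) := by
  obtain ⟨y0, hy0, hy0eq⟩ := Xj.exists_mem_eq_inf' hXj
    (fun y => dotProduct (θj - Aj.transpose.mulVec Δ) y)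
  have key : ∀ (n : ℕ) (A : Matrix (Fin K) (Fin n) ℝ) (v : Fin K → ℝ) (x : Fin n → ℝ),
      dotProduct (A.transpose.mulVec v) x = dotProduct v (A.mulVec x) := by
    intro n A v x
    rw [Matrix.mulVec_transpose, ← Matrix.dotProduct_mulVec]
  have hi : Xi.inf' hXi (fun x => dotProduct θi x) = dotProduct θi xstar :=
    le_antisymm (Finset.inf'_le _ hxstar) (Finset.le_inf' _ _ hxstarmin)
  have hi' : Xi.inf' hXi (fun x => dotProduct (θi + Ai.transpose.mulVec Δ) x)
      = dotProduct (θi + Ai.transpose.mulVec Δ) xstar :=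
    le_antisymm (Finset.inf'_le _ hxstar) (Finset.le_inf' _ _ hxstarmin')
  have hj : Xj.inf' hXj (fun y => dotProduct θj y) ≤ dotProduct θj y0 :=
    Finset.inf'_le _ hy0
  rw [hi, hi', hy0eq]
  have hnn : 0 ≤ dotProduct Δ (Ai.mulVec xstar) - dotProduct Δ (Aj.mulVec y0) := by
    rw [dotProduct, dotProduct, ← Finset.sum_sub_distrib]
    apply Finset.sum_nonneg
    intro s _
    rw [← mul_sub]
    rcases hAi xstar hxstar s with h1 | h1 <;> rcases hAj y0 hy0 s with h2 | h2 <;>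
      rw [h1, h2] <;> simp [mul_nonneg, mul_nonpos_iff, (hΔ s).1, (hΔ s).2, h1, h2]
  have e1 : dotProduct (θi + Ai.transpose.mulVec Δ) xstar
      = dotProduct θi xstar + dotProduct Δ (Ai.mulVec xstar) := by
    rw [add_dotProduct, key di]
  have e2 : dotProduct (θj - Aj.transpose.mulVec Δ) y0
      = dotProduct θj y0 - dotProduct Δ (Aj.mulVec y0) := by
    rw [sub_dotProduct, key dj]
  rw [e1, e2]
  linarith
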